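/- Linear programming strong duality for optimal transport on finite spaces: the minimum of Σ_{i,j} C(i,j)·γ(i,j) over nonnegative matrices γ with row sums ν and column sums μ equals the maximum of Σ_i f(i)·ν(i) + Σ_j g(j)·μ(j) over functions f, g satisfying f(i) + g(j) ≤ C(i,j) for all i, j. -/

import Mathlib

open Finset Real

/-- LP strong duality for optimal transport on finite spaces: both the
primal minimum and the dual maximum are attained and equal. -/
theorem ot_strong_duality
    (I J : Type) [Fintype I] [Fintype J] [Nonempty I] [Nonempty J]
    (C : I → J → ℝ)
    (ν : I → ℝ) (hν : ∀ i, 0 ≤ ν i) (hνsum : ∑ i, ν i = 1)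
    (μ : J → ℝ) (hμ : ∀ j, 0 ≤ μ j) (hμsum : ∑ j, μ j = 1) :
    ∃ w : ℝ,
      IsLeast {c : ℝ | ∃ γ : I → J → ℝ, (∀ i j, 0 ≤ γ i j) ∧
        (∀ i, ∑ j, γ i j = ν i) ∧ (∀ j, ∑ i, γ i j = μ j) ∧
        c = ∑ i, ∑ j, C i j * γ i j} w ∧
      IsGreatest {v : ℝ | ∃ f : I → ℝ, ∃ g : J → ℝ,
        (∀ i j, f i + g j ≤ C i j) ∧
        v = (∑ i, f i * ν i) + ∑ j, g j * μ j} w := by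
  classical
  -- the cost functional on couplings indexed by pairs
  set cost : (I × J → ℝ) → ℝ := fun γ => ∑ p : I × J, C p.1 p.2 * γ p with hcost
  have hcost_cont : Continuous cost :=
    continuous_finset_sum _ fun p _ => continuous_const.mul (continuous_apply p)
  -- primal feasible set (uncurried)
  set K : Set (I × J → ℝ) := {γ | (∀ p, 0 ≤ γ p) ∧ (∀ i, ∑ j, γ (i, j) = ν i) ∧
      (∀ j, ∑ i, γ (i, j) = μ j)} with hK
  have hKne : K.Nonempty := by
    refine ⟨fun p => ν p.1 * μ p.2, fun p => mul_nonneg (hν p.1) (hμ p.2), fun i => ?_, fun j => ?_⟩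
    · simp only []
      rw [← Finset.mul_sum, hμsum, mul_one]
    · simp only []
      rw [← Finset.sum_mul, hνsum, one_mul]
  have hKclosed : IsClosed K := by
    have h1 : IsClosed {γ : I × J → ℝ | ∀ p, 0 ≤ γ p} := by
      rw [Set.setOf_forall]
      exact isClosed_iInter fun p => isClosed_le continuous_const (continuous_apply p)
    have h2 : IsClosed {γ : I × J → ℝ | ∀ i, ∑ j, γ (i, j) = ν i} := by
      rw [Set.setOf_forall]
      exact isClosed_iInter fun i =>
        isClosed_eq (continuous_finset_sum _ fun j _ => continuous_apply _) continuous_const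
    have h3 : IsClosed {γ : I × J → ℝ | ∀ j, ∑ i, γ (i, j) = μ j} := by
      rw [Set.setOf_forall]
      exact isClosed_iInter fun j =>
        isClosed_eq (continuous_finset_sum _ fun i _ => continuous_apply _) continuous_const
    have : K = {γ : I × J → ℝ | ∀ p, 0 ≤ γ p} ∩
        ({γ | ∀ i, ∑ j, γ (i, j) = ν i} ∩ {γ | ∀ j, ∑ i, γ (i, j) = μ j}) := by
      ext γ; simp [hK, and_assoc]
    rw [this]
    exact h1.inter (h2.inter h3)
  have hKcompact : IsCompact K := by
    refine IsCompact.of_isClosed_subset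
      (isCompact_univ_pi fun _ => isCompact_Icc (a := (0 : ℝ)) (b := 1)) hKclosed ?_
    intro γ hγ
    rw [Set.mem_univ_pi]
    intro p
    refine ⟨hγ.1 p, ?_⟩
    calc γ p = γ (p.1, p.2) := by rw [Prod.mk.eta]
      _ ≤ ∑ j, γ (p.1, j) := Finset.single_le_sum (fun j _ => hγ.1 (p.1, j)) (mem_univ p.2)
      _ = ν p.1 := hγ.2.1 p.1
      _ ≤ ∑ i, ν i := Finset.single_le_sum (fun i _ => hν i) (mem_univ p.1)
      _ = 1 := hνsum
  obtain ⟨γ₀, hγ₀K, hγ₀min⟩ := hKcompact.exists_isMinOn hKne hcost_cont.continuousOn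
  set w := cost γ₀ with hw
  -- weak duality
  have weak : ∀ (f : I → ℝ) (g : J → ℝ), (∀ i j, f i + g j ≤ C i j) → ∀ γ ∈ K,
      (∑ i, f i * ν i) + ∑ j, g j * μ j ≤ cost γ := by
    intro f g hfg γ hγ
    have h1 : ∑ i, f i * ν i = ∑ p : I × J, f p.1 * γ p := by
      rw [Fintype.sum_prod_type]
      exact Finset.sum_congr rfl fun i _ => by rw [← hγ.2.1 i, Finset.mul_sum]
    have h2 : ∑ j, g j * μ j = ∑ p : I × J, g p.2 * γ p := by
      rw [Fintype.sum_prod_type_right]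
      exact Finset.sum_congr rfl fun j _ => by rw [← hγ.2.2 j, Finset.mul_sum]
    rw [h1, h2, ← Finset.sum_add_distrib, hcost]
    refine Finset.sum_le_sum fun p _ => ?_
    rw [← add_mul]
    exact mul_le_mul_of_nonneg_right (hfg p.1 p.2) (hγ.1 p)
  -- the linear map to the marginal/cost space
  set T : (I × J → ℝ) →ₗ[ℝ] (I → ℝ) × (J → ℝ) × ℝ :=
    { toFun := fun γ => (fun i => ∑ j, γ (i, j), fun j => ∑ i, γ (i, j), cost γ)
      map_add' := by
        intro x y
        refine Prod.ext (funext fun i => ?_) (Prod.ext (funext fun j => ?_) ?_) <;>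
          simp [hcost, Finset.sum_add_distrib, mul_add]
      map_smul' := by
        intro c x
        refine Prod.ext (funext fun i => ?_) (Prod.ext (funext fun j => ?_) ?_) <;>
          simp [hcost, Finset.mul_sum, mul_left_comm] } with hT
  have hTcont : Continuous T := T.continuous_of_finiteDimensional
  set A : Set ((I → ℝ) × (J → ℝ) × ℝ) := T '' stdSimplex ℝ (I × J) with hA
  have hAconv : Convex ℝ A := (convex_stdSimplex ℝ (I × J)).linear_image T
  have hAcompact : IsCompact A := (isCompact_stdSimplex ℝ (I × J)).image hTcont
  -- every K-member is in the simplex and maps to (ν, μ, its cost)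
  have hKsimp : ∀ γ ∈ K, γ ∈ stdSimplex ℝ (I × J) := by
    intro γ hγ
    refine ⟨hγ.1, ?_⟩
    rw [Fintype.sum_prod_type]
    calc ∑ i, ∑ j, γ (i, j) = ∑ i, ν i := Finset.sum_congr rfl fun i _ => hγ.2.1 i
      _ = 1 := hνsum
  -- approximate strong duality: dual values exceed any t < w
  have dual_exists : ∀ t < w, ∃ (f : I → ℝ) (g : J → ℝ), (∀ i j, f i + g j ≤ C i j) ∧
      t < (∑ i, f i * ν i) + ∑ j, g j * μ j := by
    intro t ht
    have hpA : ((ν, μ, t) : (I → ℝ) × (J → ℝ) × ℝ) ∉ A := by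
      rintro ⟨γ, hγs, hγe⟩
      have hγK : γ ∈ K := by
        refine ⟨hγs.1, fun i => ?_, fun j => ?_⟩
        · exact congrFun (congrArg Prod.fst hγe) i
        · exact congrFun (congrArg (fun x => x.2.1) hγe) j
      have hcγ : cost γ = t := congrArg (fun x => x.2.2) hγe
      have := hγ₀min hγK
      simp only [Set.mem_setOf_eq] at this
      rw [hcγ] at this
      exact absurd this (not_le.mpr ht)
    obtain ⟨L, u, hLp, hLA⟩ :=
      geometric_hahn_banach_point_closed hAconv hAcompact.isClosed hpA
    set f0 : I → ℝ := fun i => L (Pi.single i 1, 0, 0) with hf0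
    set g0 : J → ℝ := fun j => L (0, Pi.single j 1, 0) with hg0
    set a : ℝ := L (0, 0, 1) with ha
    have hLdec : ∀ x : (I → ℝ) × (J → ℝ) × ℝ,
        L x = (∑ i, x.1 i * f0 i) + (∑ j, x.2.1 j * g0 j) + x.2.2 * a := by
      intro x
      have hx : x = (∑ i, x.1 i • ((Pi.single i 1 : I → ℝ), (0 : J → ℝ), (0 : ℝ)))
          + (∑ j, x.2.1 j • ((0 : I → ℝ), (Pi.single j 1 : J → ℝ), (0 : ℝ)))
          + x.2.2 • ((0 : I → ℝ), (0 : J → ℝ), (1 : ℝ)) := by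
        refine Prod.ext ?_ (Prod.ext ?_ ?_) <;>
          simp [Prod.fst_sum, Prod.snd_sum, ← Pi.single_smul, Finset.univ_sum_single]
      conv_lhs => rw [hx]
      simp only [map_add, map_sum, map_smul, smul_eq_mul, hf0, hg0, ha]
    -- generators
    have hgen : ∀ i j, u < f0 i + g0 j + C i j * a := by
      intro i j
      have hmem : (Pi.single (i, j) 1 : I × J → ℝ) ∈ stdSimplex ℝ (I × J) := by
        constructor
        · intro p; by_cases hp : p = (i, j) <;> simp [Pi.single_apply, hp]
        · simp [Finset.sum_pi_single']
      have hTA : T (Pi.single (i, j) 1) ∈ A := ⟨_, hmem, rfl⟩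
      have := hLA _ hTA
      rw [hLdec] at this
      have hrow : ∀ i', (T (Pi.single (i, j) (1 : ℝ))).1 i' = if i' = i then 1 else 0 := by
        intro i'
        simp only [hT, LinearMap.coe_mk, AddHom.coe_mk]
        by_cases h : i' = i
        · subst h; simp [Pi.single_apply, Prod.ext_iff]
        · simp [Pi.single_apply, Prod.ext_iff, h]
      have hcol : ∀ j', (T (Pi.single (i, j) (1 : ℝ))).2.1 j' = if j' = j then 1 else 0 := by
        intro j'
        simp only [hT, LinearMap.coe_mk, AddHom.coe_mk]
        by_cases h : j' = j
        · subst h; simp [Pi.single_apply, Prod.ext_iff]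
        · simp [Pi.single_apply, Prod.ext_iff, h]
      have e1 : ∑ i', (T (Pi.single (i, j) (1 : ℝ))).1 i' * f0 i' = f0 i := by
        simp only [hrow, ite_mul, one_mul, zero_mul]
        simp [Finset.sum_ite_eq']
      have e2 : ∑ j', (T (Pi.single (i, j) (1 : ℝ))).2.1 j' * g0 j' = g0 j := by
        simp only [hcol, ite_mul, one_mul, zero_mul]
        simp [Finset.sum_ite_eq']
      have e3 : (T (Pi.single (i, j) (1 : ℝ))).2.2 = C i j := by
        simp only [hT, LinearMap.coe_mk, AddHom.coe_mk, hcost]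
        simp [Pi.single_apply, mul_ite, Finset.sum_ite_eq']
      rw [e1, e2, e3] at this
      exact this
    -- a is positive
    have hwA : ((ν, μ, w) : (I → ℝ) × (J → ℝ) × ℝ) ∈ A := by
      refine ⟨γ₀, hKsimp γ₀ hγ₀K, ?_⟩
      refine Prod.ext (funext fun i => ?_) (Prod.ext (funext fun j => ?_) rfl)
      · exact hγ₀K.2.1 i
      · exact hγ₀K.2.2 j
    have hq := hLA _ hwA
    rw [hLdec] at hq hLp
    simp only at hq hLp
    have hapos : 0 < a := by
      by_contra h
      push_neg at h
      have : w * a ≤ t * a := mul_le_mul_of_nonpos_right (le_of_lt ht) h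
      linarith
    -- construct the dual pair
    refine ⟨fun i => (u / 2 - f0 i) / a, fun j => (u / 2 - g0 j) / a, fun i j => ?_, ?_⟩
    · rw [← add_div, div_le_iff₀ hapos]
      have h := hgen i j
      linarith
    · have e1 : ∑ i, (u / 2 - f0 i) / a * ν i = (u / 2 - ∑ i, ν i * f0 i) / a := by
        calc ∑ i, (u / 2 - f0 i) / a * ν i = (∑ i, (u / 2 * ν i - ν i * f0 i)) / a := by
              rw [Finset.sum_div]
              exact Finset.sum_congr rfl fun i _ => by ring
          _ = (u / 2 - ∑ i, ν i * f0 i) / a := by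
              rw [Finset.sum_sub_distrib, ← Finset.mul_sum, hνsum, mul_one]
      have e2 : ∑ j, (u / 2 - g0 j) / a * μ j = (u / 2 - ∑ j, μ j * g0 j) / a := by
        calc ∑ j, (u / 2 - g0 j) / a * μ j = (∑ j, (u / 2 * μ j - μ j * g0 j)) / a := by
              rw [Finset.sum_div]
              exact Finset.sum_congr rfl fun j _ => by ring
          _ = (u / 2 - ∑ j, μ j * g0 j) / a := by
              rw [Finset.sum_sub_distrib, ← Finset.mul_sum, hμsum, mul_one]
      rw [e1, e2, ← add_div, lt_div_iff₀ hapos]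
      linarith
  -- now the dual maximum over a compact normalized set
  have huniv_ne : (Finset.univ : Finset (I × J)).Nonempty := Finset.univ_nonempty
  set m : ℝ := Finset.univ.sup' huniv_ne (fun p : I × J => |C p.1 p.2|) with hm
  have hmC : ∀ i j, |C i j| ≤ m := fun i j => by
    rw [hm]; exact Finset.le_sup' (fun p : I × J => |C p.1 p.2|) (mem_univ (i, j))
  have hm0 : 0 ≤ m := le_trans (abs_nonneg _)
    (hmC (Classical.arbitrary I) (Classical.arbitrary J))
  set D : Set ((I → ℝ) × (J → ℝ)) := {fg | (∀ i, |fg.1 i| ≤ 3 * m) ∧ (∀ j, |fg.2 j| ≤ 3 * m) ∧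
      ∀ i j, fg.1 i + fg.2 j ≤ C i j} with hD
  set V : (I → ℝ) × (J → ℝ) → ℝ := fun fg => (∑ i, fg.1 i * ν i) + ∑ j, fg.2 j * μ j with hV
  have hVcont : Continuous V := by
    refine Continuous.add ?_ ?_
    · exact continuous_finset_sum _ fun i _ =>
        (((continuous_apply i).comp continuous_fst).mul continuous_const)
    · exact continuous_finset_sum _ fun j _ =>
        (((continuous_apply j).comp continuous_snd).mul continuous_const)
  have hDne : D.Nonempty := by
    refine ⟨(fun _ => -m, fun _ => 0), fun i => ?_, fun j => ?_, fun i j => ?_⟩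
    · rw [abs_neg, abs_of_nonneg hm0]; linarith
    · rw [abs_zero]; linarith
    · have := hmC i j
      have := neg_abs_le (C i j)
      simp only
      linarith
  have hDclosed : IsClosed D := by
    have h1 : IsClosed {fg : (I → ℝ) × (J → ℝ) | ∀ i, |fg.1 i| ≤ 3 * m} := by
      rw [Set.setOf_forall]
      exact isClosed_iInter fun i => isClosed_le
        ((continuous_apply i).comp continuous_fst).abs continuous_const
    have h2 : IsClosed {fg : (I → ℝ) × (J → ℝ) | ∀ j, |fg.2 j| ≤ 3 * m} := by
      rw [Set.setOf_forall]
      exact isClosed_iInter fun j => isClosed_le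
        ((continuous_apply j).comp continuous_snd).abs continuous_const
    have h3 : IsClosed {fg : (I → ℝ) × (J → ℝ) | ∀ i j, fg.1 i + fg.2 j ≤ C i j} := by
      rw [Set.setOf_forall]
      refine isClosed_iInter fun i => ?_
      rw [Set.setOf_forall]
      exact isClosed_iInter fun j => isClosed_le
        (((continuous_apply i).comp continuous_fst).add
          ((continuous_apply j).comp continuous_snd)) continuous_const
    have : D = {fg : (I → ℝ) × (J → ℝ) | ∀ i, |fg.1 i| ≤ 3 * m} ∩
        ({fg | ∀ j, |fg.2 j| ≤ 3 * m} ∩ {fg | ∀ i j, fg.1 i + fg.2 j ≤ C i j}) := by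
      ext fg; simp [hD, and_assoc]
    rw [this]; exact h1.inter (h2.inter h3)
  have hDcompact : IsCompact D := by
    refine IsCompact.of_isClosed_subset
      (IsCompact.prod (isCompact_univ_pi fun _ : I => isCompact_Icc (a := -(3*m)) (b := 3*m))
        (isCompact_univ_pi fun _ : J => isCompact_Icc (a := -(3*m)) (b := 3*m))) hDclosed ?_
    rintro ⟨f, g⟩ hfg
    exact ⟨Set.mem_univ_pi.2 fun i => abs_le.mp (hfg.1 i),
      Set.mem_univ_pi.2 fun j => abs_le.mp (hfg.2.1 j)⟩
  obtain ⟨fg₀, hfg₀D, hfg₀max⟩ := hDcompact.exists_isMaxOn hDne hVcont.continuousOn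
  -- regularization: every feasible dual pair is dominated by one in D
  have regular : ∀ (f : I → ℝ) (g : J → ℝ), (∀ i j, f i + g j ≤ C i j) →
      ∃ fg ∈ D, (∑ i, f i * ν i) + ∑ j, g j * μ j ≤ V fg := by
    intro f g hfg
    set i₀ := Classical.arbitrary I with hi₀
    have huI : (Finset.univ : Finset I).Nonempty := Finset.univ_nonempty
    have huJ : (Finset.univ : Finset J).Nonempty := Finset.univ_nonempty
    set g₁ : J → ℝ := fun j => Finset.univ.inf' huI (fun i => C i j - f i) with hg₁
    have hg₁le : ∀ i j, g₁ j ≤ C i j - f i := fun i j => Finset.inf'_le _ (mem_univ i)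
    have hgg₁ : ∀ j, g j ≤ g₁ j := fun j =>
      Finset.le_inf' _ _ fun i _ => by linarith [hfg i j]
    set f₁ : I → ℝ := fun i => Finset.univ.inf' huJ (fun j => C i j - g₁ j) with hf₁
    have hf₁le : ∀ i j, f₁ i ≤ C i j - g₁ j := fun i j => Finset.inf'_le _ (mem_univ j)
    have hff₁ : ∀ i, f i ≤ f₁ i := fun i =>
      Finset.le_inf' _ _ fun j _ => by linarith [hg₁le i j]
    set c := f₁ i₀ with hc
    set f₂ : I → ℝ := fun i => f₁ i - c with hf₂
    set g₃ : J → ℝ := fun j => Finset.univ.inf' huI (fun i => C i j - f₂ i) with hg₃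
    have hg₃le : ∀ i j, g₃ j ≤ C i j - f₂ i := fun i j => Finset.inf'_le _ (mem_univ i)
    have hg₁cg₃ : ∀ j, g₁ j + c ≤ g₃ j := fun j =>
      Finset.le_inf' _ _ fun i _ => by
        have := hf₁le i j; simp only [hf₂]; linarith
    have hfeas : ∀ i j, f₂ i + g₃ j ≤ C i j := fun i j => by linarith [hg₃le i j]
    have hf₂ub : ∀ i, f₂ i ≤ 2 * m := by
      intro i
      obtain ⟨js, _, hjs⟩ := Finset.exists_mem_eq_inf' huJ (fun j => C i₀ j - g₁ j)
      have h1 : f₁ i ≤ C i js - g₁ js := hf₁le i js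
      have h2 : c = C i₀ js - g₁ js := hjs
      have := hmC i js; have := hmC i₀ js
      have := abs_le.mp (hmC i js); have := abs_le.mp (hmC i₀ js)
      simp only [hf₂]; linarith
    have hf₂lb : ∀ i, -(2 * m) ≤ f₂ i := by
      intro i
      obtain ⟨js, _, hjs⟩ := Finset.exists_mem_eq_inf' huJ (fun j => C i j - g₁ j)
      have h1 : f₁ i = C i js - g₁ js := hjs
      have h2 : c ≤ C i₀ js - g₁ js := hf₁le i₀ js
      have := abs_le.mp (hmC i js); have := abs_le.mp (hmC i₀ js)
      simp only [hf₂]; linarith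
    have hf₂i₀ : f₂ i₀ = 0 := by simp [hf₂, hc]
    have hg₃ub : ∀ j, g₃ j ≤ m := by
      intro j
      have := hg₃le i₀ j
      rw [hf₂i₀] at this
      have := abs_le.mp (hmC i₀ j)
      linarith
    have hg₃lb : ∀ j, -(3 * m) ≤ g₃ j := by
      intro j
      refine Finset.le_inf' _ _ fun i _ => ?_
      have := abs_le.mp (hmC i j)
      have := hf₂ub i
      linarith
    refine ⟨(f₂, g₃), ⟨fun i => abs_le.2 ⟨by linarith [hf₂lb i], by linarith [hf₂ub i, hm0]⟩,
      fun j => abs_le.2 ⟨hg₃lb j, by linarith [hg₃ub j, hm0]⟩, hfeas⟩, ?_⟩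
    -- value comparison
    have v1 : ∑ i, f i * ν i ≤ ∑ i, f₁ i * ν i :=
      Finset.sum_le_sum fun i _ => mul_le_mul_of_nonneg_right (hff₁ i) (hν i)
    have v2' : ∑ j, (g₁ j + c) * μ j ≤ ∑ j, g₃ j * μ j :=
      Finset.sum_le_sum fun j _ => mul_le_mul_of_nonneg_right (hg₁cg₃ j) (hμ j)
    have e1 : ∑ i, f₂ i * ν i = (∑ i, f₁ i * ν i) - c := by
      simp only [hf₂, sub_mul, Finset.sum_sub_distrib, ← Finset.mul_sum, hνsum, mul_one]
    have e2 : ∑ j, (g₁ j + c) * μ j = (∑ j, g₁ j * μ j) + c := by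
      simp only [add_mul, Finset.sum_add_distrib, ← Finset.mul_sum, hμsum, mul_one]
    have v0 : ∑ j, g j * μ j ≤ ∑ j, g₁ j * μ j :=
      Finset.sum_le_sum fun j _ => mul_le_mul_of_nonneg_right (hgg₁ j) (hμ j)
    simp only [hV, e1]
    have : ∑ j, g₁ j * μ j + c ≤ ∑ j, g₃ j * μ j := by rw [← e2]; exact v2'
    linarith
  -- the dual maximum equals w
  have hVle : ∀ fg ∈ D, V fg ≤ w := by
    intro fg hfg
    exact weak fg.1 fg.2 hfg.2.2 γ₀ hγ₀K
  have hVw : V fg₀ = w := by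
    refine le_antisymm (hVle fg₀ hfg₀D) ?_
    refine le_of_forall_lt fun t ht => ?_
    obtain ⟨f, g, hfeas, hval⟩ := dual_exists t ht
    obtain ⟨fg, hfgD, hle⟩ := regular f g hfeas
    calc t < (∑ i, f i * ν i) + ∑ j, g j * μ j := hval
      _ ≤ V fg := hle
      _ ≤ V fg₀ := hfg₀max hfgD
  refine ⟨w, ⟨⟨fun i j => γ₀ (i, j), fun i j => hγ₀K.1 (i, j), hγ₀K.2.1, hγ₀K.2.2, ?_⟩, ?_⟩,
    ⟨⟨fg₀.1, fg₀.2, hfg₀D.2.2, hVw.symm⟩, ?_⟩⟩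
  · simp only [hw, hcost, Fintype.sum_prod_type]
  · rintro c ⟨γ, hγ0, hγ1, hγ2, rfl⟩
    have hγK : (fun p : I × J => γ p.1 p.2) ∈ K := ⟨fun p => hγ0 p.1 p.2, hγ1, hγ2⟩
    have := hγ₀min hγK
    simp only [Set.mem_setOf_eq, hcost, Fintype.sum_prod_type] at this
    simp only [hw, hcost, Fintype.sum_prod_type]
    exact this
  · rintro v ⟨f, g, hfeas, rfl⟩
    exact weak f g hfeas γ₀ hγ₀K
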